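/- For every steplength γ > 0 and every j ≥ 0, the AsyRK iterates satisfy 𝔼(‖Ax_{j+1} − b‖²) ≤ 𝔼(‖Ax_j − b‖²) + (α²γ²/m) 𝔼(‖Ax_{k(j)} − b‖²) − (2γ/m) 𝔼(‖Aᵀ(Ax_{k(j)} − b)‖²) + (γ²λ_max²/m²) Σ_{d=k(j)}^{j−1} [ 𝔼(‖Ax_{k(d)} − b‖²) + 𝔼(‖Ax_{k(j)} − b‖²) ]. -/

import Mathlib

open Matrix Finset

theorem symmSum {n : ℕ} (M : Matrix (Fin n) (Fin n) ℝ) (hMt : ∀ a b, M a b = M b a)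
    (u v : Fin n → ℝ) : ∑ s, u s * M.mulVec v s = ∑ s, M.mulVec u s * v s := by
  simp only [Matrix.mulVec, dotProduct, Finset.mul_sum, Finset.sum_mul]
  rw [Finset.sum_comm]
  refine Finset.sum_congr rfl fun s _ => Finset.sum_congr rfl fun t _ => ?_
  rw [hMt t s]; ring

theorem rayleighAux {n : ℕ} (M : Matrix (Fin n) (Fin n) ℝ) (hM : M.IsHermitian) (lam : ℝ)
    (hub : ∀ c, (∃ v : Fin n → ℝ, v ≠ 0 ∧ M.mulVec v = c • v) → c ≤ lam)
    (w : Fin n → ℝ) :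
    ∑ u, w u * M.mulVec w u ≤ lam * ∑ u, (w u)^2 := by
  classical
  set B := hM.eigenvectorBasis with hB
  have hev : ∀ i, hM.eigenvalues i ≤ lam := by
    intro i
    refine hub _ ⟨⇑(B i), ?_, ?_⟩
    · intro h0
      have : ‖B i‖ = 1 := B.orthonormal.1 i
      rw [show (B i : EuclideanSpace ℝ (Fin n)) = 0 from by ext u; simpa using congrFun h0 u] at this
      simp at this
    · exact hM.mulVec_eigenvectorBasis i
  have hMt : ∀ a b, M a b = M b a := fun a b => by
    have := congrFun (congrFun hM.eq b) a
    simpa [Matrix.conjTranspose_apply] using this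
  set x : EuclideanSpace ℝ (Fin n) := WithLp.toLp 2 w with hx
  set y : EuclideanSpace ℝ (Fin n) := WithLp.toLp 2 (M.mulVec w) with hy
  have hsym : ∀ i, (inner ℝ (B i) y : ℝ) = hM.eigenvalues i * inner ℝ (B i) x := by
    intro i
    have h1 : (inner ℝ (B i) y : ℝ)
        = inner ℝ (show EuclideanSpace ℝ (Fin n) from WithLp.toLp 2 (M.mulVec ⇑(B i))) x := by
      simp only [PiLp.inner_apply, RCLike.inner_apply, starRingEnd_apply, star_trivial]
      simpa only [hx, hy, WithLp.ofLp_toLp, mul_comm] using symmSum M hMt (⇑(B i)) w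
    rw [h1, hM.mulVec_eigenvectorBasis i]
    exact real_inner_smul_left _ _ _
  have e1 : (inner ℝ x y : ℝ) = ∑ i, hM.eigenvalues i * (inner ℝ (B i) x : ℝ)^2 := by
    rw [← B.sum_inner_mul_inner x y]
    refine Finset.sum_congr rfl fun i _ => ?_
    rw [hsym i, real_inner_comm x (B i)]; ring
  have e2 : (inner ℝ x x : ℝ) = ∑ i, (inner ℝ (B i) x : ℝ)^2 := by
    rw [← B.sum_inner_mul_inner x x]
    refine Finset.sum_congr rfl fun i _ => ?_
    rw [real_inner_comm x (B i)]; ring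
  have e3 : (inner ℝ x y : ℝ) = ∑ u, w u * M.mulVec w u := by
    rw [hx, hy, PiLp.inner_apply]; simp [mul_comm]
  have e4 : (inner ℝ x x : ℝ) = ∑ u, (w u)^2 := by
    rw [hx, PiLp.inner_apply]; simp [sq]
  rw [← e3, ← e4, e1, e2, Finset.mul_sum]
  exact Finset.sum_le_sum fun i _ => mul_le_mul_of_nonneg_right (hev i) (sq_nonneg _)

theorem ipCS {m : ℕ} (u v : Fin m → ℝ) :
    ∑ s, u s * v s ≤ Real.sqrt (∑ s, u s ^ 2) * Real.sqrt (∑ s, v s ^ 2) := by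
  have h := Finset.sum_mul_sq_le_sq_mul_sq Finset.univ u v
  calc ∑ s, u s * v s ≤ |∑ s, u s * v s| := le_abs_self _
    _ = Real.sqrt ((∑ s, u s * v s)^2) := (Real.sqrt_sq_eq_abs _).symm
    _ ≤ Real.sqrt ((∑ s, u s ^2) * (∑ s, v s ^2)) := Real.sqrt_le_sqrt h
    _ = _ := Real.sqrt_mul (Finset.sum_nonneg fun s _ => sq_nonneg _) _

theorem adjSum {m n : ℕ} (A : Matrix (Fin m) (Fin n) ℝ) (w : Fin n → ℝ) (z : Fin m → ℝ) :
    ∑ u, w u * Aᵀ.mulVec z u = ∑ s, A.mulVec w s * z s := by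
  simp only [Matrix.mulVec, dotProduct, Matrix.transpose_apply,
    Finset.mul_sum, Finset.sum_mul]
  rw [Finset.sum_comm]
  exact Finset.sum_congr rfl fun s _ => Finset.sum_congr rfl fun t _ => by ring

theorem qfId {m n : ℕ} (A : Matrix (Fin m) (Fin n) ℝ) (w : Fin n → ℝ) :
    ∑ u, w u * (Aᵀ * A).mulVec w u = ∑ s, A.mulVec w s ^ 2 := by
  rw [← Matrix.mulVec_mulVec, adjSum]
  exact Finset.sum_congr rfl fun s _ => (sq _).symm

section
variable {m n : ℕ} (A : Matrix (Fin m) (Fin n) ℝ) (lam : ℝ)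
  (hlam : IsGreatest {c : ℝ | ∃ v : Fin n → ℝ, v ≠ 0 ∧ (Aᵀ * A).mulVec v = c • v} lam)

include hlam

theorem lamNonneg : 0 ≤ lam := by
  obtain ⟨v, hv, heig⟩ := hlam.1
  have hpos : 0 < ∑ u, (v u)^2 := by
    obtain ⟨u0, hu0⟩ := Function.ne_iff.1 hv
    have hu0' : v u0 ≠ 0 := by simpa using hu0
    exact Finset.sum_pos' (fun u _ => sq_nonneg _)
      ⟨u0, Finset.mem_univ _, sq_pos_of_ne_zero hu0'⟩
  have h1 : ∑ u, v u * (Aᵀ * A).mulVec v u = lam * ∑ u, (v u)^2 := by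
    rw [heig, Finset.mul_sum]
    exact Finset.sum_congr rfl fun u _ => by simp [Pi.smul_apply, smul_eq_mul]; ring
  have h2 : 0 ≤ lam * ∑ u, (v u)^2 := by
    rw [← h1, qfId]; exact Finset.sum_nonneg fun s _ => sq_nonneg _
  by_contra h
  push_neg at h
  nlinarith

theorem mulVecBound : ∀ w : Fin n → ℝ, ∑ s, A.mulVec w s ^ 2 ≤ lam * ∑ u, (w u)^2 := by
  intro w
  rw [← qfId]
  exact rayleighAux _ (Matrix.isHermitian_conjTranspose_mul_self A) lam
    (fun c hc => hlam.2 hc) w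

theorem mulVecTBound : ∀ z : Fin m → ℝ, ∑ u, Aᵀ.mulVec z u ^ 2 ≤ lam * ∑ s, (z s)^2 := by
  intro z
  have hlam0 := lamNonneg A lam hlam
  set Y := ∑ u, Aᵀ.mulVec z u ^ 2 with hY
  have hY0 : 0 ≤ Y := Finset.sum_nonneg fun u _ => sq_nonneg _
  have hz0 : (0:ℝ) ≤ ∑ s, (z s)^2 := Finset.sum_nonneg fun s _ => sq_nonneg _
  have e : Y = ∑ s, A.mulVec (Aᵀ.mulVec z) s * z s := by
    rw [hY, ← adjSum A]
    exact Finset.sum_congr rfl fun u _ => (sq _)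
  have step : Y ≤ Real.sqrt (lam * Y) * Real.sqrt (∑ s, (z s)^2) := by
    calc Y = ∑ s, A.mulVec (Aᵀ.mulVec z) s * z s := e
      _ ≤ Real.sqrt (∑ s, A.mulVec (Aᵀ.mulVec z) s ^2) * Real.sqrt (∑ s, (z s)^2) := ipCS _ _
      _ ≤ Real.sqrt (lam * Y) * Real.sqrt (∑ s, (z s)^2) := by
          apply mul_le_mul_of_nonneg_right _ (Real.sqrt_nonneg _)
          exact Real.sqrt_le_sqrt (mulVecBound A lam hlam _)
  rcases eq_or_lt_of_le hY0 with h0 | hpos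
  · rw [← h0]; exact mul_nonneg hlam0 hz0
  · have hsq : Y^2 ≤ (lam * Y) * ∑ s, (z s)^2 := by
      calc Y^2 ≤ (Real.sqrt (lam * Y) * Real.sqrt (∑ s, (z s)^2))^2 := by
            apply pow_le_pow_left₀ hY0 step
        _ = (lam * Y) * ∑ s, (z s)^2 := by
            rw [mul_pow, Real.sq_sqrt (by positivity), Real.sq_sqrt hz0]
    nlinarith [hsq, hpos]

theorem crossBound (a c : Fin m → ℝ) :
    ∑ s, A.mulVec (Aᵀ.mulVec a) s * A.mulVec (Aᵀ.mulVec c) s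
      ≤ lam^2 / 2 * ((∑ s, a s ^2) + (∑ s, c s ^2)) := by
  have hlam0 := lamNonneg A lam hlam
  have ha : ∑ s, A.mulVec (Aᵀ.mulVec a) s ^2 ≤ lam^2 * ∑ s, a s ^2 := by
    calc ∑ s, A.mulVec (Aᵀ.mulVec a) s ^2 ≤ lam * ∑ u, Aᵀ.mulVec a u ^2 :=
          mulVecBound A lam hlam _
      _ ≤ lam * (lam * ∑ s, a s ^2) :=
          mul_le_mul_of_nonneg_left (mulVecTBound A lam hlam _) hlam0
      _ = lam^2 * ∑ s, a s ^2 := by ring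
  have hc : ∑ s, A.mulVec (Aᵀ.mulVec c) s ^2 ≤ lam^2 * ∑ s, c s ^2 := by
    calc ∑ s, A.mulVec (Aᵀ.mulVec c) s ^2 ≤ lam * ∑ u, Aᵀ.mulVec c u ^2 :=
          mulVecBound A lam hlam _
      _ ≤ lam * (lam * ∑ s, c s ^2) :=
          mul_le_mul_of_nonneg_left (mulVecTBound A lam hlam _) hlam0
      _ = lam^2 * ∑ s, c s ^2 := by ring
  have h1 : (0:ℝ) ≤ ∑ s, a s ^2 := Finset.sum_nonneg fun s _ => sq_nonneg _
  have h2 : (0:ℝ) ≤ ∑ s, c s ^2 := Finset.sum_nonneg fun s _ => sq_nonneg _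
  calc ∑ s, A.mulVec (Aᵀ.mulVec a) s * A.mulVec (Aᵀ.mulVec c) s
      ≤ Real.sqrt (∑ s, A.mulVec (Aᵀ.mulVec a) s ^2) * Real.sqrt (∑ s, A.mulVec (Aᵀ.mulVec c) s ^2) := ipCS _ _
    _ ≤ Real.sqrt (lam^2 * ∑ s, a s ^2) * Real.sqrt (lam^2 * ∑ s, c s ^2) := by
        apply mul_le_mul (Real.sqrt_le_sqrt ha) (Real.sqrt_le_sqrt hc)
          (Real.sqrt_nonneg _) (Real.sqrt_nonneg _)
    _ ≤ lam^2 / 2 * ((∑ s, a s ^2) + (∑ s, c s ^2)) := by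
        rw [Real.sqrt_mul (sq_nonneg lam), Real.sqrt_mul (sq_nonneg lam),
          Real.sqrt_sq_eq_abs, abs_of_nonneg hlam0]
        have amgm : Real.sqrt (∑ s, a s ^2) * Real.sqrt (∑ s, c s ^2)
            ≤ ((∑ s, a s ^2) + (∑ s, c s ^2)) / 2 := by
          nlinarith [Real.sq_sqrt h1, Real.sq_sqrt h2,
            sq_nonneg (Real.sqrt (∑ s, a s ^2) - Real.sqrt (∑ s, c s ^2)),
            Real.sqrt_nonneg (∑ s, a s ^2), Real.sqrt_nonneg (∑ s, c s ^2)]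
        calc lam * Real.sqrt (∑ s, a s ^2) * (lam * Real.sqrt (∑ s, c s ^2))
            = lam^2 * (Real.sqrt (∑ s, a s ^2) * Real.sqrt (∑ s, c s ^2)) := by ring
          _ ≤ lam^2 * (((∑ s, a s ^2) + (∑ s, c s ^2)) / 2) := by
              apply mul_le_mul_of_nonneg_left amgm (sq_nonneg lam)
          _ = lam^2 / 2 * ((∑ s, a s ^2) + (∑ s, c s ^2)) := by ring
end

def asyY {m n : ℕ} (A : Matrix (Fin m) (Fin n) ℝ) (b : Fin m → ℝ) (θ : Fin m → ℕ)
    (γ : ℝ) (k : ℕ → ℕ) (hk : ∀ j, k j ≤ j) (x0 : Fin n → ℝ) :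
    ℕ → (ℕ → Fin m × Fin n) → Fin n → ℝ
  | 0 => fun _ => x0
  | (d+1) => fun z s =>
      asyY A b θ γ k hk x0 d z s -
        (if s = (z d).2 then
          γ * (θ (z d).1 : ℝ) * A (z d).1 (z d).2 *
            ((∑ t, A (z d).1 t * asyY A b θ γ k hk x0 (k d) z t) - b (z d).1)
         else 0)
termination_by d => d
decreasing_by
  · exact Nat.lt_succ_of_le (Nat.le_refl d)
  · exact Nat.lt_succ_of_le (hk d)

theorem asyY_congr {m n : ℕ} (A : Matrix (Fin m) (Fin n) ℝ) (b : Fin m → ℝ) (θ : Fin m → ℕ)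
    (γ : ℝ) (k : ℕ → ℕ) (hk : ∀ j, k j ≤ j) (x0 : Fin n → ℝ) :
    ∀ d (z z' : ℕ → Fin m × Fin n), (∀ r, r < d → z r = z' r) →
      asyY A b θ γ k hk x0 d z = asyY A b θ γ k hk x0 d z' := by
  intro d
  induction d using Nat.strong_induction_on with
  | _ d ih =>
    match d with
    | 0 => intro z z' _; simp [asyY]
    | (d+1) =>
      intro z z' h
      funext s
      have h1 : asyY A b θ γ k hk x0 d z = asyY A b θ γ k hk x0 d z' :=
        ih d (Nat.lt_succ_self d) z z' (fun r hr => h r (Nat.lt_succ_of_lt hr))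
      have h2 : asyY A b θ γ k hk x0 (k d) z = asyY A b θ γ k hk x0 (k d) z' :=
        ih (k d) (Nat.lt_succ_of_le (hk d)) z z'
          (fun r hr => h r (Nat.lt_succ_of_lt (lt_of_lt_of_le hr (hk d))))
      have h3 : z d = z' d := h d (Nat.lt_succ_self d)
      simp only [asyY, h1, h2, h3]

theorem condSum {ι : Type*} [Fintype ι] [DecidableEq ι] {N : ℕ} (q : ι → ℝ)
    (hq : ∑ p, q p = 1) (d0 : Fin N) (F : (Fin N → ι) → ℝ) :
    ∑ z : Fin N → ι, (∏ r, q (z r)) * F z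
      = ∑ z : Fin N → ι, (∏ r, q (z r)) * ∑ p, q p * F (Function.update z d0 p) := by
  classical
  have wupd : ∀ (z : Fin N → ι) (p : ι),
      (∏ r, q (Function.update z d0 p r)) = q p * ∏ r ∈ Finset.univ.erase d0, q (z r) := by
    intro z p
    have : ∀ r, q (Function.update z d0 p r) = Function.update (fun r => q (z r)) d0 (q p) r := by
      intro r
      by_cases hr : r = d0
      · subst hr; simp
      · simp [Function.update_of_ne hr]
    rw [Finset.prod_congr rfl (fun r _ => this r)]
    rw [Finset.prod_update_of_mem (Finset.mem_univ d0)]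
    rw [Finset.erase_eq]
  have wsplit : ∀ (z : Fin N → ι),
      (∏ r, q (z r)) = q (z d0) * ∏ r ∈ Finset.univ.erase d0, q (z r) :=
    fun z => (Finset.mul_prod_erase Finset.univ _ (Finset.mem_univ d0)).symm
  symm
  calc ∑ z : Fin N → ι, (∏ r, q (z r)) * ∑ p, q p * F (Function.update z d0 p)
      = ∑ zp ∈ (Finset.univ ×ˢ Finset.univ : Finset ((Fin N → ι) × ι)),
          (∏ r, q (zp.1 r)) * (q zp.2 * F (Function.update zp.1 d0 zp.2)) := by
        rw [Finset.sum_product]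
        exact Finset.sum_congr rfl fun z _ => by rw [Finset.mul_sum]
    _ = ∑ zp ∈ (Finset.univ ×ˢ Finset.univ : Finset ((Fin N → ι) × ι)),
          (∏ r, q (Function.update zp.1 d0 zp.2 r)) * (q (zp.1 d0) * F zp.1) := by
        apply Finset.sum_nbij'
          (i := fun zp => (Function.update zp.1 d0 zp.2, zp.1 d0))
          (j := fun zp => (Function.update zp.1 d0 zp.2, zp.1 d0))
        · intro a _; exact Finset.mem_product.2 ⟨Finset.mem_univ _, Finset.mem_univ _⟩
        · intro a _; exact Finset.mem_product.2 ⟨Finset.mem_univ _, Finset.mem_univ _⟩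
        · intro a _
          ext r
          · by_cases hr : r = d0
            · subst hr; simp
            · simp [Function.update_of_ne hr]
          · simp
        · intro a _
          ext r
          · by_cases hr : r = d0
            · subst hr; simp
            · simp [Function.update_of_ne hr]
          · simp
        · intro a _
          simp only
          rw [Function.update_idem, Function.update_self, Function.update_eq_self]
    _ = ∑ z : Fin N → ι, ∑ p, (∏ r, q (Function.update z d0 p r)) * (q (z d0) * F z) := by
        rw [Finset.sum_product]
    _ = ∑ z : Fin N → ι, (∏ r, q (z r)) * F z := by
        refine Finset.sum_congr rfl fun z _ => ?_
        rw [wsplit z]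
        calc ∑ p, (∏ r, q (Function.update z d0 p r)) * (q (z d0) * F z)
            = ∑ p, q p * ((∏ r ∈ Finset.univ.erase d0, q (z r)) * (q (z d0) * F z)) := by
              refine Finset.sum_congr rfl fun p _ => ?_
              rw [wupd z p]; ring
          _ = (∏ r ∈ Finset.univ.erase d0, q (z r)) * (q (z d0) * F z) := by
              rw [← Finset.sum_mul, hq, one_mul]
          _ = q (z d0) * (∏ r ∈ Finset.univ.erase d0, q (z r)) * F z := by ring

noncomputable def qdist {m n : ℕ} (A : Matrix (Fin m) (Fin n) ℝ) (θ : Fin m → ℕ) :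
    Fin m × Fin n → ℝ :=
  fun p => if A p.1 p.2 ≠ 0 then ((m : ℝ) * (θ p.1 : ℝ))⁻¹ else 0

theorem qdist_nonneg {m n : ℕ} (A : Matrix (Fin m) (Fin n) ℝ) (θ : Fin m → ℕ)
    (p : Fin m × Fin n) : 0 ≤ qdist A θ p := by
  unfold qdist
  split_ifs
  · positivity
  · exact le_rfl

theorem qdist_sum {m n : ℕ} (hm : 0 < m) (A : Matrix (Fin m) (Fin n) ℝ) (θ : Fin m → ℕ)
    (hθ : ∀ i, (θ i : ℝ) = ((Finset.univ.filter (fun t => A i t ≠ 0)).card : ℝ))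
    (hθpos : ∀ i, 0 < θ i) :
    ∑ p, qdist A θ p = 1 := by
  classical
  rw [Fintype.sum_prod_type]
  have hrow : ∀ i, ∑ t, qdist A θ (i, t) = (m : ℝ)⁻¹ := by
    intro i
    unfold qdist
    simp only []
    rw [Finset.sum_ite, Finset.sum_const, Finset.sum_const, smul_zero, add_zero,
      nsmul_eq_mul]
    have h1 : (θ i : ℝ) ≠ 0 := Nat.cast_ne_zero.2 (Nat.pos_iff_ne_zero.1 (hθpos i))
    have h2 : (m : ℝ) ≠ 0 := Nat.cast_ne_zero.2 (Nat.pos_iff_ne_zero.1 hm)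
    have hcard : ((Finset.univ.filter (fun t => A i t ≠ 0)).card : ℝ) = (θ i : ℝ) := (hθ i).symm
    rw [show (Finset.univ.filter (fun x : Fin n => A (i, x).1 (i, x).2 ≠ 0))
        = Finset.univ.filter (fun t => A i t ≠ 0) from rfl, hcard]
    field_simp
  rw [Finset.sum_congr rfl (fun i _ => hrow i), Finset.sum_const, Finset.card_univ,
    Fintype.card_fin, nsmul_eq_mul]
  field_simp

theorem tripleSum {m n : ℕ} (A : Matrix (Fin m) (Fin n) ℝ) (v c : Fin m → ℝ) :
    ∑ i, ∑ t, c i * (A i t * ∑ s, v s * A s t)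
      = ∑ s, v s * A.mulVec (Aᵀ.mulVec c) s := by
  simp only [Matrix.mulVec, dotProduct, Matrix.transpose_apply, Finset.mul_sum]
  -- LHS : ∑ i ∑ t ∑ s, c i * (A i t * (v s * A s t))
  have step1 : (∑ i, ∑ t, ∑ s, c i * (A i t * (v s * A s t)))
      = ∑ s, ∑ i, ∑ t, c i * (A i t * (v s * A s t)) := by
    rw [show (∑ i, ∑ t, ∑ s, c i * (A i t * (v s * A s t)))
        = ∑ i, ∑ s, ∑ t, c i * (A i t * (v s * A s t)) from
      Finset.sum_congr rfl fun i _ => Finset.sum_comm]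
    exact Finset.sum_comm
  have step2 : (∑ s, ∑ t, ∑ i, v s * (A s t * (A i t * c i)))
      = ∑ s, ∑ i, ∑ t, v s * (A s t * (A i t * c i)) :=
    Finset.sum_congr rfl fun s _ => Finset.sum_comm
  rw [step1, step2]
  exact Finset.sum_congr rfl fun s _ => Finset.sum_congr rfl fun i _ =>
    Finset.sum_congr rfl fun t _ => by ring

theorem deltaInner {m n : ℕ} (hm : 0 < m) (A : Matrix (Fin m) (Fin n) ℝ) (θ : Fin m → ℕ)
    (hθpos : ∀ i, 0 < θ i) (γ : ℝ) (v c : Fin m → ℝ) :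
    ∑ p, qdist A θ p * (∑ s, v s * (γ * (θ p.1 : ℝ) * A s p.2 * A p.1 p.2 * c p.1))
      = γ / m * ∑ s, v s * A.mulVec (Aᵀ.mulVec c) s := by
  classical
  rw [Fintype.sum_prod_type]
  have hterm : ∀ i t, qdist A θ (i, t) * (∑ s, v s * (γ * (θ i : ℝ) * A s t * A i t * c i))
      = γ / m * (c i * (A i t * ∑ s, v s * A s t)) := by
    intro i t
    unfold qdist
    by_cases h : A i t = 0
    · rw [if_neg (not_not_intro h), zero_mul, h]
      simp
    · rw [if_pos h]
      have h1 : (θ i : ℝ) ≠ 0 := Nat.cast_ne_zero.2 (Nat.pos_iff_ne_zero.1 (hθpos i))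
      have h2 : (m : ℝ) ≠ 0 := Nat.cast_ne_zero.2 (Nat.pos_iff_ne_zero.1 hm)
      simp only [Finset.mul_sum]
      refine Finset.sum_congr rfl fun s _ => ?_
      field_simp
  rw [Finset.sum_congr rfl (fun i _ => Finset.sum_congr rfl (fun t _ => hterm i t))]
  rw [← tripleSum A v c, Finset.mul_sum]
  exact Finset.sum_congr rfl fun i _ => (Finset.mul_sum _ _ _).symm

theorem deltaSqBound {m n : ℕ} (hm : 0 < m) (A : Matrix (Fin m) (Fin n) ℝ) (θ : Fin m → ℕ)
    (hθ : ∀ i, (θ i : ℝ) = ((Finset.univ.filter (fun t => A i t ≠ 0)).card : ℝ))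
    (hθpos : ∀ i, 0 < θ i) (γ α : ℝ)
    (hα2 : ∀ i t, A i t ≠ 0 → ∑ s, ((θ i : ℝ) * A s t * A i t)^2 ≤ α^2)
    (c : Fin m → ℝ) :
    ∑ p, qdist A θ p * (∑ s, (γ * (θ p.1 : ℝ) * A s p.2 * A p.1 p.2 * c p.1)^2)
      ≤ α^2 * γ^2 / m * ∑ i, (c i)^2 := by
  classical
  rw [Fintype.sum_prod_type]
  have hrow : ∀ i, ∑ t, qdist A θ (i, t) * (∑ s, (γ * (θ i : ℝ) * A s t * A i t * c i)^2)
      ≤ α^2 * γ^2 / m * (c i)^2 := by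
    intro i
    have h1 : (θ i : ℝ) ≠ 0 := Nat.cast_ne_zero.2 (Nat.pos_iff_ne_zero.1 (hθpos i))
    have h2 : (m : ℝ) ≠ 0 := Nat.cast_ne_zero.2 (Nat.pos_iff_ne_zero.1 hm)
    have hub : ∀ t, qdist A θ (i, t) * (∑ s, (γ * (θ i : ℝ) * A s t * A i t * c i)^2)
        ≤ (if A i t ≠ 0 then ((m : ℝ) * (θ i : ℝ))⁻¹ * (α^2 * γ^2 * (c i)^2) else 0) := by
      intro t
      unfold qdist
      by_cases h : A i t ≠ 0
      · rw [if_pos h, if_pos h]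
        apply mul_le_mul_of_nonneg_left _ (by positivity)
        have he : ∑ s, (γ * (θ i : ℝ) * A s t * A i t * c i)^2
            = γ^2 * (c i)^2 * ∑ s, ((θ i : ℝ) * A s t * A i t)^2 := by
          rw [Finset.mul_sum]; exact Finset.sum_congr rfl fun s _ => by ring
        rw [he]
        calc γ^2 * (c i)^2 * ∑ s, ((θ i : ℝ) * A s t * A i t)^2
            ≤ γ^2 * (c i)^2 * α^2 := by
              apply mul_le_mul_of_nonneg_left (hα2 i t h) (by positivity)
          _ = α^2 * γ^2 * (c i)^2 := by ring
      · rw [if_neg h, if_neg h, zero_mul]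
    calc ∑ t, qdist A θ (i, t) * (∑ s, (γ * (θ i : ℝ) * A s t * A i t * c i)^2)
        ≤ ∑ t, (if A i t ≠ 0 then ((m : ℝ) * (θ i : ℝ))⁻¹ * (α^2 * γ^2 * (c i)^2) else 0) :=
          Finset.sum_le_sum fun t _ => hub t
      _ = α^2 * γ^2 / m * (c i)^2 := by
          rw [Finset.sum_ite, Finset.sum_const, Finset.sum_const, smul_zero, add_zero,
            nsmul_eq_mul]
          rw [show (Finset.univ.filter (fun x : Fin n => A i x ≠ 0))
              = Finset.univ.filter (fun t => A i t ≠ 0) from rfl, ← hθ i]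
          field_simp
  calc ∑ i, ∑ t, qdist A θ (i, t) * (∑ s, (γ * (θ i : ℝ) * A s t * A i t * c i)^2)
      ≤ ∑ i, α^2 * γ^2 / m * (c i)^2 := Finset.sum_le_sum fun i _ => hrow i
    _ = α^2 * γ^2 / m * ∑ i, (c i)^2 := by rw [Finset.mul_sum]

open MeasureTheory ProbabilityTheory Matrix Finset
open scoped Classical

theorem stmt10
    {m n : ℕ} (hm : 0 < m) (hn : 0 < n)
    (A : Matrix (Fin m) (Fin n) ℝ) (b : Fin m → ℝ)
    (hconsistent : ∃ z : Fin n → ℝ, A.mulVec z = b)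
    (hrows : ∀ i, ∑ t, (A i t) ^ 2 = 1)
    (θ : Fin m → ℕ)
    (hθ : ∀ i, θ i = (Finset.univ.filter (fun t => A i t ≠ 0)).card)
    (α : ℝ)
    (hα : IsGreatest {r : ℝ | ∃ i t, A i t ≠ 0 ∧
      r = Real.sqrt (∑ s, ((θ i : ℝ) * A s t * A i t) ^ 2)} α)
    (lammax : ℝ)
    (hlammax : IsGreatest
      {c : ℝ | ∃ v : Fin n → ℝ, v ≠ 0 ∧ (Aᵀ * A).mulVec v = c • v} lammax)
    (τ : ℕ) (hτ : 1 ≤ τ)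
    (k : ℕ → ℕ) (hk : ∀ j, j - τ ≤ k j ∧ k j ≤ j)
    (γ : ℝ) (hγ : 0 < γ)
    {Ω : Type*} [MeasurableSpace Ω] (P : Measure Ω) [IsProbabilityMeasure P]
    (Z : ℕ → Ω → Fin m × Fin n)
    (hZmeas : ∀ j, Measurable (Z j))
    (hZindep : iIndepFun Z P)
    (hZdist : ∀ j (p : Fin m × Fin n),
      P {ω | Z j ω = p} =
        if A p.1 p.2 ≠ 0 then ((m : ENNReal) * (θ p.1 : ENNReal))⁻¹ else 0)
    (x0 : Fin n → ℝ)
    (x : ℕ → Ω → Fin n → ℝ)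
    (hx0 : ∀ ω, x 0 ω = x0)
    (hrec : ∀ j ω s, x (j + 1) ω s = x j ω s -
      (if s = (Z j ω).2 then
        γ * (θ (Z j ω).1 : ℝ) * A (Z j ω).1 (Z j ω).2 *
          ((∑ t, A (Z j ω).1 t * x (k j) ω t) - b (Z j ω).1)
       else 0))
    (j : ℕ) :
    (∫ ω, ∑ s, (A.mulVec (x (j + 1) ω) s - b s) ^ 2 ∂P) ≤ (∫ ω, ∑ s, (A.mulVec (x j ω) s - b s) ^ 2 ∂P)
      + α ^ 2 * γ ^ 2 / m * (∫ ω, ∑ s, (A.mulVec (x (k j) ω) s - b s) ^ 2 ∂P)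
      - 2 * γ / m *
        (∫ ω, ∑ u, (Aᵀ.mulVec (A.mulVec (x (k j) ω) - b) u) ^ 2 ∂P)
      + γ ^ 2 * lammax ^ 2 / m ^ 2 *
        ∑ d ∈ Finset.Ico (k j) j, ((∫ ω, ∑ s, (A.mulVec (x (k d) ω) s - b s) ^ 2 ∂P) + (∫ ω, ∑ s, (A.mulVec (x (k j) ω) s - b s) ^ 2 ∂P)) := by
  classical
  -- basic facts
  have hmR : ((m : ℝ)) ≠ 0 := Nat.cast_ne_zero.2 (Nat.pos_iff_ne_zero.1 hm)
  have hθpos : ∀ i, 0 < θ i := by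
    intro i
    rw [hθ i, Finset.card_pos]
    by_contra h
    rw [Finset.not_nonempty_iff_eq_empty] at h
    have hall : ∀ t, A i t = 0 := by
      intro t
      by_contra ht
      have : t ∈ Finset.univ.filter (fun t => A i t ≠ 0) :=
        Finset.mem_filter.2 ⟨Finset.mem_univ _, ht⟩
      rw [h] at this
      exact absurd this (Finset.notMem_empty t)
    have h1 := hrows i
    rw [Finset.sum_congr rfl (fun t _ => by rw [hall t]; norm_num : ∀ t ∈ Finset.univ, (A i t)^2 = 0),
      Finset.sum_const, smul_zero] at h1
    norm_num at h1
  have hθR : ∀ i, (θ i : ℝ) = ((Finset.univ.filter (fun t => A i t ≠ 0)).card : ℝ) :=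
    fun i => by rw [hθ i]
  have hα0 : 0 ≤ α := by
    obtain ⟨i, t, _, he⟩ := hα.1
    rw [he]; exact Real.sqrt_nonneg _
  have hα2 : ∀ i t, A i t ≠ 0 → ∑ s, ((θ i : ℝ) * A s t * A i t)^2 ≤ α^2 := by
    intro i t h
    have hle : Real.sqrt (∑ s, ((θ i : ℝ) * A s t * A i t)^2) ≤ α := hα.2 ⟨i, t, h, rfl⟩
    have hX : 0 ≤ ∑ s, ((θ i : ℝ) * A s t * A i t)^2 :=
      Finset.sum_nonneg fun s _ => sq_nonneg _
    calc ∑ s, ((θ i : ℝ) * A s t * A i t)^2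
        = (Real.sqrt (∑ s, ((θ i : ℝ) * A s t * A i t)^2))^2 := (Real.sq_sqrt hX).symm
      _ ≤ α^2 := pow_le_pow_left₀ (Real.sqrt_nonneg _) hle 2
  have hk' : ∀ d, k d ≤ d := fun d => (hk d).2
  set N := j + 1 with hN
  set q : Fin m × Fin n → ℝ := qdist A θ with hqdef
  have hq1 : ∑ p, q p = 1 := qdist_sum hm A θ hθR hθpos
  set y := asyY A b θ γ k hk' x0 with hydef
  -- x equals the deterministic recursion applied to the sample path
  have hxy : ∀ d ω, x d ω = y d (fun r => Z r ω) := by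
    intro d
    induction d using Nat.strong_induction_on with
    | _ d ih =>
      match d with
      | 0 => intro ω; rw [hx0]; simp [hydef, asyY]
      | (d+1) =>
        intro ω
        funext s
        rw [hrec d ω s, ih d (Nat.lt_succ_self d) ω, ih (k d) (Nat.lt_succ_of_le (hk' d)) ω]
        simp only [hydef]
        conv_rhs => rw [asyY]
  -- the extension of a finite path
  set dflt : Fin m × Fin n := (⟨0, hm⟩, ⟨0, hn⟩) with hdflt
  set ext : (Fin N → Fin m × Fin n) → (ℕ → Fin m × Fin n) :=
    fun z r => if h : r < N then z ⟨r, h⟩ else dflt with hext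
  set W : Ω → (Fin N → Fin m × Fin n) := fun ω d => Z d ω with hWdef
  have hWmeas : Measurable W := measurable_pi_lambda _ (fun d => hZmeas d)
  set w : (Fin N → Fin m × Fin n) → ℝ := fun z => ∏ r, q (z r) with hwdef
  have hw0 : ∀ z, 0 ≤ w z := fun z => Finset.prod_nonneg fun r _ => qdist_nonneg A θ _
  -- integral reduction
  have hint : ∀ G : (Fin N → Fin m × Fin n) → ℝ, ∫ ω, G (W ω) ∂P = ∑ z, w z * G z := by
    intro G
    haveI : IsProbabilityMeasure (P.map W) := Measure.isProbabilityMeasure_map hWmeas.aemeasurable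
    rw [← integral_map hWmeas.aemeasurable (measurable_of_countable G).aestronglyMeasurable,
      MeasureTheory.integral_fintype (Integrable.of_finite)]
    refine Finset.sum_congr rfl fun z _ => ?_
    rw [smul_eq_mul]
    congr 1
    -- (P.map W {z}).toReal = w z
    rw [measureReal_def, Measure.map_apply hWmeas (measurableSet_singleton z)]
    have hpre : W ⁻¹' {z} = ⋂ r ∈ Finset.range N, (Z r) ⁻¹' {ext z r} := by
      ext ω
      simp only [Set.mem_preimage, Set.mem_singleton_iff, Set.mem_iInter, Finset.mem_range]
      constructor
      · intro h r hr
        have : W ω ⟨r, hr⟩ = z ⟨r, hr⟩ := by rw [h]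
        simpa [hWdef, hext, dif_pos hr] using this
      · intro h
        funext d
        have := h d.val d.isLt
        simpa [hWdef, hext, dif_pos d.isLt] using this
    rw [hpre, hZindep.meas_biInter (fun r _ => ⟨{ext z r}, measurableSet_singleton _, rfl⟩)]
    have hfac : ∀ r : ℕ, (P ((Z r) ⁻¹' {ext z r})).toReal = q (ext z r) := by
      intro r
      have : (Z r) ⁻¹' {ext z r} = {ω | Z r ω = ext z r} := rfl
      rw [this, hZdist r (ext z r), hqdef]
      unfold qdist
      split_ifs
      · rw [ENNReal.toReal_inv, ENNReal.toReal_mul, ENNReal.toReal_natCast,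
          ENNReal.toReal_natCast]
      · simp
    rw [ENNReal.toReal_prod, Finset.prod_congr rfl (fun r _ => hfac r), hwdef]
    rw [← Fin.prod_univ_eq_prod_range (fun r => q (ext z r)) N]
    refine Finset.prod_congr rfl fun i _ => ?_
    congr 1
    simp [hext]
  -- deterministic residual quantities
  set e : ℕ → (Fin N → Fin m × Fin n) → Fin m → ℝ :=
    fun d z s => A.mulVec (y d (ext z)) s - b s with hedef
  set Rr : ℕ → (Fin N → Fin m × Fin n) → ℝ := fun d z => ∑ s, (e d z s)^2 with hRdef
  set Ss : ℕ → (Fin N → Fin m × Fin n) → ℝ := fun d z => ∑ u, (Aᵀ.mulVec (e d z) u)^2 with hSdef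
  have hyW : ∀ d, d ≤ N → ∀ ω, y d (ext (W ω)) = x d ω := by
    intro d hd ω
    rw [hxy d ω]
    apply asyY_congr
    intro r hr
    have hrN : r < N := lt_of_lt_of_le hr hd
    simp [hext, hWdef, dif_pos hrN]
  have hR : ∀ d, d ≤ N → (∫ ω, ∑ s, (A.mulVec (x d ω) s - b s)^2 ∂P) = ∑ z, w z * Rr d z := by
    intro d hd
    have heq : (fun ω => ∑ s, (A.mulVec (x d ω) s - b s)^2) = fun ω => Rr d (W ω) := by
      funext ω
      simp only [hRdef, hedef]
      rw [hyW d hd ω]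
    calc (∫ ω, ∑ s, (A.mulVec (x d ω) s - b s)^2 ∂P) = ∫ ω, Rr d (W ω) ∂P := by rw [heq]
      _ = ∑ z, w z * Rr d z := hint (Rr d)
  have hS : (∫ ω, ∑ u, (Aᵀ.mulVec (A.mulVec (x (k j) ω) - b) u)^2 ∂P)
      = ∑ z, w z * Ss (k j) z := by
    have hkjN : k j ≤ N := le_trans (hk' j) (by omega)
    have heq : (fun ω => ∑ u, (Aᵀ.mulVec (A.mulVec (x (k j) ω) - b) u)^2)
        = fun ω => Ss (k j) (W ω) := by
      funext ω
      simp only [hSdef, hedef]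
      rw [hyW (k j) hkjN ω]
      rfl
    calc (∫ ω, ∑ u, (Aᵀ.mulVec (A.mulVec (x (k j) ω) - b) u)^2 ∂P)
        = ∫ ω, Ss (k j) (W ω) ∂P := by rw [heq]
      _ = ∑ z, w z * Ss (k j) z := hint (Ss (k j))
  -- update vector
  set Dl : ℕ → (Fin N → Fin m × Fin n) → Fin m → ℝ := fun d z s =>
    if hd : d < N then
      γ * (θ (z ⟨d, hd⟩).1 : ℝ) * A s (z ⟨d, hd⟩).2 * A (z ⟨d, hd⟩).1 (z ⟨d, hd⟩).2
        * e (k d) z (z ⟨d, hd⟩).1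
    else 0 with hDdef
  have hstep : ∀ d, ∀ hd : d < N, ∀ z s, e (d+1) z s = e d z s - Dl d z s := by
    intro d hd z s
    have hextd : ext z d = z ⟨d, hd⟩ := by simp [hext, dif_pos hd]
    have hyunf : ∀ u, y (d+1) (ext z) u = y d (ext z) u -
        (if u = (ext z d).2 then
          γ * (θ (ext z d).1 : ℝ) * A (ext z d).1 (ext z d).2 *
            ((∑ t, A (ext z d).1 t * y (k d) (ext z) t) - b (ext z d).1)
         else 0) := by
      intro u
      simp only [hydef]
      conv_lhs => rw [asyY]
    simp only [hedef, hDdef, dif_pos hd, Matrix.mulVec, dotProduct]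
    have hsum1 : ∀ u : Fin n, A s u * y (d+1) (ext z) u
        = A s u * y d (ext z) u - (if u = (ext z d).2 then
            A s u * (γ * (θ (ext z d).1 : ℝ) * A (ext z d).1 (ext z d).2 *
              ((∑ t, A (ext z d).1 t * y (k d) (ext z) t) - b (ext z d).1)) else 0) := by
      intro u
      rw [hyunf u]
      split_ifs <;> ring
    rw [Finset.sum_congr rfl (fun u _ => hsum1 u), Finset.sum_sub_distrib,
      Finset.sum_ite_eq' Finset.univ ((ext z d).2)
        (fun u => A s u * (γ * (θ (ext z d).1 : ℝ) * A (ext z d).1 (ext z d).2 *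
          ((∑ t, A (ext z d).1 t * y (k d) (ext z) t) - b (ext z d).1)))]
    rw [if_pos (Finset.mem_univ _), hextd]
    ring
  have hloc : ∀ (c : ℕ) (z : Fin N → Fin m × Fin n) (d0 : Fin N) (p : Fin m × Fin n),
      c ≤ d0.val → ∀ s, e c (Function.update z d0 p) s = e c z s := by
    intro c z d0 p hc s
    simp only [hedef]
    have : y c (ext (Function.update z d0 p)) = y c (ext z) := by
      apply asyY_congr
      intro r hr
      have hrd : r ≠ d0.val := by omega
      simp only [hext]
      split_ifs with h
      · rw [Function.update_of_ne (Fin.ne_of_val_ne hrd)]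
      · rfl
    rw [this]
  have htel : ∀ c, k j ≤ c → c ≤ j → ∀ z s,
      e c z s = e (k j) z s - ∑ d ∈ Finset.Ico (k j) c, Dl d z s := by
    intro c hc1
    induction c, hc1 using Nat.le_induction with
    | base => intro _ z s; simp
    | succ c hc ih =>
      intro hc2 z s
      have hcN : c < N := by omega
      rw [hstep c hcN z s, ih (by omega) z s, Finset.sum_Ico_succ_top hc]
      ring
  set lastIdx : Fin N := ⟨j, by omega⟩ with hlastdef
  set g : (Fin N → Fin m × Fin n) → Fin m → ℝ :=
    fun z s => A.mulVec (Aᵀ.mulVec (e (k j) z)) s with hgdef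
  -- expectation of squared update
  have hB : ∑ z, w z * (∑ s, (Dl j z s)^2)
      ≤ α^2 * γ^2 / (m:ℝ) * ∑ z, w z * Rr (k j) z := by
    rw [show (∑ z, w z * (∑ s, (Dl j z s)^2))
        = ∑ z : Fin N → Fin m × Fin n, (∏ r, q (z r)) * (∑ s, (Dl j z s)^2) from rfl]
    rw [condSum q hq1 lastIdx (fun z => ∑ s, (Dl j z s)^2)]
    have hbnd : ∀ z : Fin N → Fin m × Fin n,
        (∑ p, q p * ∑ s, (Dl j (Function.update z lastIdx p) s)^2)
          ≤ α^2 * γ^2 / (m:ℝ) * Rr (k j) z := by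
      intro z
      have hFu : ∀ p : Fin m × Fin n, (∑ s, (Dl j (Function.update z lastIdx p) s)^2)
          = ∑ s, (γ * (θ p.1 : ℝ) * A s p.2 * A p.1 p.2 * (e (k j) z p.1))^2 := by
        intro p
        refine Finset.sum_congr rfl fun s _ => ?_
        have hupd : (Function.update z lastIdx p) ⟨j, by omega⟩ = p := Function.update_self _ _ _
        simp only [hDdef, dif_pos (show j < N by omega), hupd]
        rw [hloc (k j) z lastIdx p (hk' j) p.1]
      rw [Finset.sum_congr rfl (fun p _ => by rw [hFu p])]
      exact deltaSqBound hm A θ hθR hθpos γ α hα2 (fun i => e (k j) z i)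
    calc ∑ z : Fin N → Fin m × Fin n, (∏ r, q (z r)) *
          (∑ p, q p * ∑ s, (Dl j (Function.update z lastIdx p) s)^2)
        ≤ ∑ z : Fin N → Fin m × Fin n, (∏ r, q (z r)) * (α^2 * γ^2 / (m:ℝ) * Rr (k j) z) :=
          Finset.sum_le_sum fun z _ => mul_le_mul_of_nonneg_left (hbnd z) (hw0 z)
      _ = α^2 * γ^2 / (m:ℝ) * ∑ z, w z * Rr (k j) z := by
          rw [Finset.mul_sum]
          exact Finset.sum_congr rfl fun z _ => by rw [hwdef]; ring
  -- expectation of cross term with current residual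
  have hC : ∑ z, w z * (∑ s, e j z s * Dl j z s)
      = γ / (m:ℝ) * ∑ z, w z * (∑ s, e j z s * g z s) := by
    rw [show (∑ z, w z * (∑ s, e j z s * Dl j z s))
        = ∑ z : Fin N → Fin m × Fin n, (∏ r, q (z r)) * (∑ s, e j z s * Dl j z s) from rfl]
    rw [condSum q hq1 lastIdx (fun z => ∑ s, e j z s * Dl j z s)]
    have hinner : ∀ z : Fin N → Fin m × Fin n,
        (∑ p, q p * ∑ s, e j (Function.update z lastIdx p) s *
          Dl j (Function.update z lastIdx p) s)
        = γ / (m:ℝ) * (∑ s, e j z s * g z s) := by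
      intro z
      have hFu : ∀ p : Fin m × Fin n,
          (∑ s, e j (Function.update z lastIdx p) s * Dl j (Function.update z lastIdx p) s)
          = ∑ s, e j z s * (γ * (θ p.1 : ℝ) * A s p.2 * A p.1 p.2 * (e (k j) z p.1)) := by
        intro p
        refine Finset.sum_congr rfl fun s _ => ?_
        have hupd : (Function.update z lastIdx p) ⟨j, by omega⟩ = p := Function.update_self _ _ _
        simp only [hDdef, dif_pos (show j < N by omega), hupd]
        rw [hloc (k j) z lastIdx p (hk' j) p.1, hloc j z lastIdx p (le_refl j) s]
      rw [Finset.sum_congr rfl (fun p _ => by rw [hFu p])]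
      rw [deltaInner hm A θ hθpos γ (fun s => e j z s) (fun i => e (k j) z i)]
    rw [Finset.sum_congr rfl (fun z _ => by rw [hinner z])]
    rw [Finset.mul_sum]
    exact Finset.sum_congr rfl fun z _ => by rw [hwdef]; ring
  -- identity : inner product with AAᵀ residual at (k j)
  have hSsId : ∀ z, (∑ s, e (k j) z s * g z s) = Ss (k j) z := by
    intro z
    calc ∑ s, e (k j) z s * g z s
        = ∑ s, A.mulVec (Aᵀ.mulVec (e (k j) z)) s * e (k j) z s :=
          Finset.sum_congr rfl fun s _ => by rw [hgdef]; ring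
      _ = ∑ u, Aᵀ.mulVec (e (k j) z) u * Aᵀ.mulVec (e (k j) z) u :=
          (adjSum A (Aᵀ.mulVec (e (k j) z)) (e (k j) z)).symm
      _ = Ss (k j) z := by
          simp only [hSdef]
          exact Finset.sum_congr rfl fun u _ => (sq _).symm
  have hsplitE : ∑ z, w z * (∑ s, e j z s * g z s)
      = (∑ z, w z * Ss (k j) z)
        - ∑ d ∈ Finset.Ico (k j) j, ∑ z, w z * (∑ s, Dl d z s * g z s) := by
    have hzpt : ∀ z, (∑ s, e j z s * g z s)
        = Ss (k j) z - ∑ d ∈ Finset.Ico (k j) j, (∑ s, Dl d z s * g z s) := by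
      intro z
      have h1 : (∑ s, e j z s * g z s)
          = ∑ s, (e (k j) z s - ∑ d ∈ Finset.Ico (k j) j, Dl d z s) * g z s :=
        Finset.sum_congr rfl fun s _ => by rw [htel j (hk' j) (le_refl j) z s]
      have h2 : (∑ s, (e (k j) z s - ∑ d ∈ Finset.Ico (k j) j, Dl d z s) * g z s)
          = (∑ s, e (k j) z s * g z s)
            - ∑ s, ∑ d ∈ Finset.Ico (k j) j, Dl d z s * g z s := by
        rw [← Finset.sum_sub_distrib]
        refine Finset.sum_congr rfl fun s _ => ?_
        rw [sub_mul, Finset.sum_mul]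
      rw [h1, h2, hSsId z, Finset.sum_comm]
    calc ∑ z, w z * (∑ s, e j z s * g z s)
        = ∑ z : Fin N → Fin m × Fin n, (w z * Ss (k j) z
            - ∑ d ∈ Finset.Ico (k j) j, w z * (∑ s, Dl d z s * g z s)) :=
          Finset.sum_congr rfl fun z _ => by rw [hzpt z, mul_sub]; congr 1; exact Finset.mul_sum _ _ _
      _ = (∑ z, w z * Ss (k j) z)
            - ∑ z : Fin N → Fin m × Fin n, ∑ d ∈ Finset.Ico (k j) j,
                w z * (∑ s, Dl d z s * g z s) := by rw [Finset.sum_sub_distrib]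
      _ = (∑ z, w z * Ss (k j) z)
            - ∑ d ∈ Finset.Ico (k j) j, ∑ z, w z * (∑ s, Dl d z s * g z s) := by
          rw [Finset.sum_comm]
  -- delayed cross terms
  have hG : ∀ d ∈ Finset.Ico (k j) j, ∑ z, w z * (∑ s, Dl d z s * g z s)
      ≤ γ * lammax^2 / (2*m) * ((∑ z, w z * Rr (k d) z) + (∑ z, w z * Rr (k j) z)) := by
    intro d hd
    obtain ⟨hd1, hd2⟩ := Finset.mem_Ico.1 hd
    have hdN : d < N := by omega
    rw [show (∑ z, w z * (∑ s, Dl d z s * g z s))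
        = ∑ z : Fin N → Fin m × Fin n, (∏ r, q (z r)) * (∑ s, Dl d z s * g z s) from rfl]
    rw [condSum q hq1 ⟨d, hdN⟩ (fun z => ∑ s, Dl d z s * g z s)]
    have hinner : ∀ z : Fin N → Fin m × Fin n,
        (∑ p, q p * ∑ s, Dl d (Function.update z ⟨d, hdN⟩ p) s *
          g (Function.update z ⟨d, hdN⟩ p) s)
        ≤ γ * lammax^2 / (2*m) * (Rr (k d) z + Rr (k j) z) := by
      intro z
      have hFu : ∀ p : Fin m × Fin n,
          (∑ s, Dl d (Function.update z ⟨d, hdN⟩ p) s * g (Function.update z ⟨d, hdN⟩ p) s)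
          = ∑ s, g z s * (γ * (θ p.1 : ℝ) * A s p.2 * A p.1 p.2 * (e (k d) z p.1)) := by
        intro p
        refine Finset.sum_congr rfl fun s _ => ?_
        have hupd : (Function.update z ⟨d, hdN⟩ p) ⟨d, hdN⟩ = p := Function.update_self _ _ _
        have hgu : g (Function.update z ⟨d, hdN⟩ p) s = g z s := by
          simp only [hgdef]
          have : e (k j) (Function.update z ⟨d, hdN⟩ p) = e (k j) z :=
            funext fun s' => hloc (k j) z ⟨d, hdN⟩ p hd1 s'
          rw [this]
        simp only [hDdef, dif_pos hdN, hupd]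
        rw [hloc (k d) z ⟨d, hdN⟩ p (hk' d) p.1, hgu]
        ring
      rw [Finset.sum_congr rfl (fun p _ => by rw [hFu p])]
      rw [deltaInner hm A θ hθpos γ (fun s => g z s) (fun i => e (k d) z i)]
      have hcb : (∑ s, g z s * A.mulVec (Aᵀ.mulVec (fun i => e (k d) z i)) s)
          ≤ lammax^2 / 2 * (Rr (k j) z + Rr (k d) z) := by
        have := crossBound A lammax hlammax (fun s => e (k j) z s) (fun s => e (k d) z s)
        simpa only [hgdef, hRdef] using this
      calc γ / (m:ℝ) * ∑ s, g z s * A.mulVec (Aᵀ.mulVec (fun i => e (k d) z i)) s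
          ≤ γ / (m:ℝ) * (lammax^2 / 2 * (Rr (k j) z + Rr (k d) z)) := by
            apply mul_le_mul_of_nonneg_left hcb (by positivity)
        _ = γ * lammax^2 / (2*m) * (Rr (k d) z + Rr (k j) z) := by ring
    calc ∑ z : Fin N → Fin m × Fin n, (∏ r, q (z r)) *
          (∑ p, q p * ∑ s, Dl d (Function.update z ⟨d, hdN⟩ p) s *
            g (Function.update z ⟨d, hdN⟩ p) s)
        ≤ ∑ z : Fin N → Fin m × Fin n, (∏ r, q (z r)) *
            (γ * lammax^2 / (2*m) * (Rr (k d) z + Rr (k j) z)) :=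
          Finset.sum_le_sum fun z _ => mul_le_mul_of_nonneg_left (hinner z) (hw0 z)
      _ = γ * lammax^2 / (2*m) * ((∑ z, w z * Rr (k d) z) + (∑ z, w z * Rr (k j) z)) := by
          rw [← Finset.sum_add_distrib, Finset.mul_sum]
          exact Finset.sum_congr rfl fun z _ => by rw [hwdef]; ring
  -- expansion of the new residual
  have hexp : ∀ z, Rr (j+1) z
      = Rr j z - 2 * (∑ s, e j z s * Dl j z s) + (∑ s, (Dl j z s)^2) := by
    intro z
    simp only [hRdef]
    have h1 : (∑ s, (e (j+1) z s)^2) = ∑ s, (e j z s - Dl j z s)^2 :=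
      Finset.sum_congr rfl fun s _ => by rw [hstep j (by omega) z s]
    have h2 : (∑ s, (e j z s - Dl j z s)^2)
        = ∑ s, ((e j z s)^2 - 2*(e j z s * Dl j z s) + (Dl j z s)^2) :=
      Finset.sum_congr rfl fun s _ => by ring
    rw [h1, h2, Finset.sum_add_distrib, Finset.sum_sub_distrib, ← Finset.mul_sum]
  have hEexp : ∑ z, w z * Rr (j+1) z
      = (∑ z, w z * Rr j z) - 2 * (∑ z, w z * (∑ s, e j z s * Dl j z s))
        + (∑ z, w z * (∑ s, (Dl j z s)^2)) := by
    have h1 : (∑ z, w z * Rr (j+1) z) = ∑ z : Fin N → Fin m × Fin n,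
        (w z * Rr j z - 2 * (w z * (∑ s, e j z s * Dl j z s))
          + w z * (∑ s, (Dl j z s)^2)) :=
      Finset.sum_congr rfl fun z _ => by rw [hexp z]; ring
    rw [h1, Finset.sum_add_distrib, Finset.sum_sub_distrib, ← Finset.mul_sum]
  -- final assembly
  have hkjN : k j ≤ N := by have := hk' j; omega
  have hjN : j ≤ N := by omega
  rw [hR N (le_refl N), hR j hjN, hR (k j) hkjN, hS]
  rw [show (∑ d ∈ Finset.Ico (k j) j,
      ((∫ ω, ∑ s, (A.mulVec (x (k d) ω) s - b s) ^ 2 ∂P)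
        + (∑ z, w z * Rr (k j) z)))
      = ∑ d ∈ Finset.Ico (k j) j, ((∑ z, w z * Rr (k d) z) + (∑ z, w z * Rr (k j) z)) from
    Finset.sum_congr rfl fun d hd => by
      obtain ⟨hd1, hd2⟩ := Finset.mem_Ico.1 hd
      rw [hR (k d) (by have := hk' d; omega)]]
  -- now a purely finitary inequality
  have hWtot : 2 * γ / (m:ℝ) *
      (∑ d ∈ Finset.Ico (k j) j, ∑ z, w z * (∑ s, Dl d z s * g z s))
      ≤ γ^2 * lammax^2 / (m:ℝ)^2 *
        ∑ d ∈ Finset.Ico (k j) j, ((∑ z, w z * Rr (k d) z) + (∑ z, w z * Rr (k j) z)) := by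
    calc 2 * γ / (m:ℝ) * (∑ d ∈ Finset.Ico (k j) j, ∑ z, w z * (∑ s, Dl d z s * g z s))
        ≤ 2 * γ / (m:ℝ) * (∑ d ∈ Finset.Ico (k j) j,
            γ * lammax^2 / (2*m) * ((∑ z, w z * Rr (k d) z) + (∑ z, w z * Rr (k j) z))) := by
          apply mul_le_mul_of_nonneg_left (Finset.sum_le_sum hG) (by positivity)
      _ = γ^2 * lammax^2 / (m:ℝ)^2 *
            ∑ d ∈ Finset.Ico (k j) j, ((∑ z, w z * Rr (k d) z) + (∑ z, w z * Rr (k j) z)) := by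
          rw [← Finset.mul_sum, ← mul_assoc]
          congr 1
          field_simp
  have hT : 2 * (∑ z, w z * (∑ s, e j z s * Dl j z s))
      = 2 * γ / (m:ℝ) * (∑ z, w z * Ss (k j) z)
        - 2 * γ / (m:ℝ) * (∑ d ∈ Finset.Ico (k j) j, ∑ z, w z * (∑ s, Dl d z s * g z s)) := by
    rw [hC, hsplitE]
    ring
  rw [show Rr N = Rr (j+1) from rfl] at *
  linarith [hEexp, hT, hB, hWtot]
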